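/- arXiv:2203.11154 — 4 statements merged into one kernel-verified Lean document; each statement's English description precedes it below -/
import Mathlib

section
/- Define f₀ : ℝ² → ℝ by f₀(θ₁, θ₂) = (7/24 + (cos θ₁ + cos θ₂)/12 + (cos θ₁ · cos θ₂)/24)·(4 − 2cos θ₁ − 2cos θ₂). Then for every θ in the high-frequency set T^H, 3/4 ≤ f₀(θ) ≤ 4/3. -/
open Real

/-- The high-frequency set `T^H = [−π/2, 3π/2)² \ [−π/2, π/2)²`. -/
def TH : Set (ℝ × ℝ) :=
  (Set.Ico (-(π/2)) (3*π/2) ×ˢ Set.Ico (-(π/2)) (3*π/2)) \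
    (Set.Ico (-(π/2)) (π/2) ×ˢ Set.Ico (-(π/2)) (π/2))

noncomputable def f0 (θ : ℝ × ℝ) : ℝ :=
  (7/24 + (Real.cos θ.1 + Real.cos θ.2)/12 + (Real.cos θ.1 * Real.cos θ.2)/24) *
    (4 - 2 * Real.cos θ.1 - 2 * Real.cos θ.2)

lemma key (x y : ℝ) (hx : -1 ≤ x) (hx1 : x ≤ 1) (hy : -1 ≤ y) (hy0 : y ≤ 0) :
    3/4 ≤ (7/24 + (x + y)/12 + (x * y)/24) * (4 - 2*x - 2*y) ∧
    (7/24 + (x + y)/12 + (x * y)/24) * (4 - 2*x - 2*y) ≤ 4/3 := by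
  constructor
  · nlinarith [mul_nonneg (sub_nonneg.2 hx1) (neg_nonneg.2 hy0),
      mul_nonneg (add_nonneg (by linarith : (0:ℝ) ≤ 1 + x) (by linarith : (0:ℝ) ≤ 0)) (by linarith : (0:ℝ) ≤ 1 + y),
      sq_nonneg (x - 1), sq_nonneg (x + y), sq_nonneg (x - y), sq_nonneg y,
      mul_nonneg (mul_nonneg (by linarith : (0:ℝ) ≤ 1 + x) (by linarith : (0:ℝ) ≤ 1 - x)) (by linarith : (0:ℝ) ≤ -y)]
  · nlinarith [mul_nonneg (by linarith : (0:ℝ) ≤ 1 + x) (by linarith : (0:ℝ) ≤ 1 + y),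
      sq_nonneg (x + 1), sq_nonneg (y + 1), sq_nonneg (x + y + 2), sq_nonneg (x - y),
      mul_nonneg (mul_nonneg (by linarith : (0:ℝ) ≤ 1 + x) (by linarith : (0:ℝ) ≤ 1 + y)) (by linarith : (0:ℝ) ≤ -y)]

theorem stmt_4 : ∀ θ ∈ TH, 3/4 ≤ f0 θ ∧ f0 θ ≤ 4/3 := by
  rintro ⟨a, b⟩ ⟨⟨⟨ha1, ha2⟩, ⟨hb1, hb2⟩⟩, hnot⟩
  simp only [Set.mem_prod, Set.mem_Ico, not_and_or, not_and, not_lt, not_le] at hnot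
  have hpi := Real.pi_pos
  have key' : ∀ c : ℝ, π/2 ≤ c → c < 3*π/2 → Real.cos c ≤ 0 := fun c h1 h2 =>
    Real.cos_nonpos_of_pi_div_two_le_of_le h1 (by linarith)
  unfold f0
  simp only
  rcases hnot with h | h
  · -- a ∉ [-π/2, π/2): either a < -π/2 (impossible) or a ≥ π/2
    rcases h with h | h
    · exact absurd ha1 (not_le.2 h)
    · have hca : Real.cos a ≤ 0 := key' a h ha2
      have := key (Real.cos b) (Real.cos a) (Real.neg_one_le_cos b) (Real.cos_le_one b)
        (Real.neg_one_le_cos a) hca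
      constructor <;> [nlinarith [this.1]; nlinarith [this.2]]
  · -- b ∉ [-π/2, π/2): h : -π/2 ≤ a → (b < -π/2 ∨ π/2 ≤ b)? check shape
    have hb : π/2 ≤ b := by
      rcases h with h' | h'
      · exact absurd hb1 (not_le.2 h')
      · exact h'
    have hcb : Real.cos b ≤ 0 := key' b hb hb2
    exact key (Real.cos a) (Real.cos b) (Real.neg_one_le_cos a) (Real.cos_le_one a)
      (Real.neg_one_le_cos b) hcb
end

section
/- Define f₀ : ℝ² → ℝ by f₀(θ₁, θ₂) = (7/24 + (cos θ₁ + cos θ₂)/12 + (cos θ₁ · cos θ₂)/24)·(4 − 2cos θ₁ − 2cos θ₂). Then for every θ in the high-frequency set T^H, |1 − (24/25)·f₀(θ)| ≤ 7/25. -/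
open Real

lemma key_stmt6 (x y : ℝ) (hx1 : -1 ≤ x) (hx2 : x ≤ 1) (hy1 : -1 ≤ y) (hy2 : y ≤ 0) :
    18 ≤ (7 + 2*x + 2*y + x*y) * (4 - 2*x - 2*y) ∧
    (7 + 2*x + 2*y + x*y) * (4 - 2*x - 2*y) ≤ 32 := by
  have hA : 0 ≤ (1 - x) * (2*x + 5) := mul_nonneg (by linarith) (by linarith)
  have hB : 0 ≤ 3 + 2*x + 2*y + x^2 + x*y := by
    nlinarith [mul_nonneg (by linarith : (0:ℝ) ≤ y + 1) (by linarith : (0:ℝ) ≤ x + 2),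
      sq_nonneg (x + 1/2)]
  have hC : 0 ≤ (-y) * (3 + 2*x + 2*y + x^2 + x*y) := mul_nonneg (by linarith) hB
  have hD : 0 ≤ (x+1) * (y+1) * (x+y+2) :=
    mul_nonneg (mul_nonneg (by linarith) (by linarith)) (by linarith)
  constructor
  · nlinarith [hA, hC]
  · nlinarith [sq_nonneg (x - y), hD]

theorem stmt_6 : ∀ θ ∈ TH, |1 - (24/25) * f0 θ| ≤ 7/25 := by
  rintro ⟨a, b⟩ ⟨⟨⟨ha1, ha2⟩, hb1, hb2⟩, hnot⟩
  set x := Real.cos a with hxd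
  set y := Real.cos b with hyd
  have hx1 : -1 ≤ x := Real.neg_one_le_cos a
  have hx2 : x ≤ 1 := Real.cos_le_one a
  have hy1 : -1 ≤ y := Real.neg_one_le_cos b
  have hy2 : y ≤ 1 := Real.cos_le_one b
  have hcase : x ≤ 0 ∨ y ≤ 0 := by
    rcases le_or_gt (π/2) a with h1 | h1
    · exact Or.inl (Real.cos_nonpos_of_pi_div_two_le_of_le h1 (by linarith))
    · rcases le_or_gt (π/2) b with h2 | h2
      · exact Or.inr (Real.cos_nonpos_of_pi_div_two_le_of_le h2 (by linarith))
      · refine absurd ?_ hnot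
        exact Set.mem_prod.2 ⟨Set.mem_Ico.2 ⟨ha1, h1⟩, Set.mem_Ico.2 ⟨hb1, h2⟩⟩
  have hbounds : 18 ≤ (7 + 2*x + 2*y + x*y) * (4 - 2*x - 2*y) ∧
      (7 + 2*x + 2*y + x*y) * (4 - 2*x - 2*y) ≤ 32 := by
    rcases hcase with h | h
    · obtain ⟨l, u⟩ := key_stmt6 y x hy1 hy2 hx1 h
      have heq : (7 + 2*y + 2*x + y*x) * (4 - 2*y - 2*x)
          = (7 + 2*x + 2*y + x*y) * (4 - 2*x - 2*y) := by ring
      exact ⟨by linarith, by linarith⟩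
    · exact key_stmt6 x y hx1 hx2 hy1 h
  have hf : f0 (a, b) = (7 + 2*x + 2*y + x*y) * (4 - 2*x - 2*y) / 24 := by
    simp only [f0]
    ring
  rw [hf, abs_le]
  exact ⟨by linarith [hbounds.2], by linarith [hbounds.1]⟩
end

section
/- Define f₀ : ℝ² → ℝ by f₀(θ₁, θ₂) = (7/24 + (cos θ₁ + cos θ₂)/12 + (cos θ₁ · cos θ₂)/24)·(4 − 2cos θ₁ − 2cos θ₂). Then for every ω ∈ ℝ, the supremum over θ in the high-frequency set T^H of |1 − ω·f₀(θ)| is at least 7/25. -/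
open Real

theorem stmt_7 (ω : ℝ) :
    7/25 ≤ sSup ((fun θ => |1 - ω * f0 θ|) '' TH) := by
  have hπ := Real.pi_pos
  have hbdd : BddAbove ((fun θ => |1 - ω * f0 θ|) '' TH) := by
    refine ⟨1 + 4 * |ω|, ?_⟩
    rintro x ⟨θ, hθ, rfl⟩
    have h1 := Real.neg_one_le_cos θ.1
    have h2 := Real.cos_le_one θ.1
    have h3 := Real.neg_one_le_cos θ.2
    have h4 := Real.cos_le_one θ.2
    have hf : |f0 θ| ≤ 4 := by
      rw [f0, abs_mul]
      have hA : |7/24 + (Real.cos θ.1 + Real.cos θ.2)/12 +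
          (Real.cos θ.1 * Real.cos θ.2)/24| ≤ 1/2 := by
        rw [abs_le]; constructor <;> nlinarith
      have hB : |4 - 2 * Real.cos θ.1 - 2 * Real.cos θ.2| ≤ 8 := by
        rw [abs_le]; constructor <;> nlinarith
      nlinarith [abs_nonneg (7/24 + (Real.cos θ.1 + Real.cos θ.2)/12 +
        (Real.cos θ.1 * Real.cos θ.2)/24),
        abs_nonneg (4 - 2 * Real.cos θ.1 - 2 * Real.cos θ.2)]
    have hwf : |ω * f0 θ| ≤ 4 * |ω| := by
      rw [abs_mul]; nlinarith [abs_nonneg ω]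
    have := abs_sub (1 : ℝ) (ω * f0 θ)
    simp only [abs_one] at this
    linarith
  have ha : ((π/2 : ℝ), (0:ℝ)) ∈ TH := by
    constructor
    · exact ⟨⟨by linarith, by linarith⟩, ⟨by linarith, by linarith⟩⟩
    · intro h
      exact absurd h.1.2 (lt_irrefl _)
  have hb : ((π : ℝ), (π : ℝ)) ∈ TH := by
    constructor
    · exact ⟨⟨by linarith, by linarith⟩, ⟨by linarith, by linarith⟩⟩
    · intro h
      have := h.1.2
      linarith
  have hfa : f0 (π/2, 0) = 3/4 := by
    simp [f0, Real.cos_pi_div_two, Real.cos_zero]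
    norm_num
  have hfb : f0 (π, π) = 4/3 := by
    simp [f0, Real.cos_pi]
    norm_num
  have ka : |1 - ω * (3/4)| ∈ ((fun θ => |1 - ω * f0 θ|) '' TH) :=
    ⟨(π/2, 0), ha, by simp only []; rw [hfa]⟩
  have kb : |1 - ω * (4/3)| ∈ ((fun θ => |1 - ω * f0 θ|) '' TH) :=
    ⟨(π, π), hb, by simp only []; rw [hfb]⟩
  rcases le_or_gt ω (24/25) with hω | hω
  · calc (7/25 : ℝ) ≤ 1 - ω * (3/4) := by linarith
      _ ≤ |1 - ω * (3/4)| := le_abs_self _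
      _ ≤ _ := le_csSup hbdd ka
  · calc (7/25 : ℝ) ≤ -(1 - ω * (4/3)) := by linarith
      _ ≤ |1 - ω * (4/3)| := neg_le_abs _
      _ ≤ _ := le_csSup hbdd kb
end

section
/- Define f₀ : ℝ² → ℝ by f₀(θ₁, θ₂) = (7/24 + (cos θ₁ + cos θ₂)/12 + (cos θ₁ · cos θ₂)/24)·(4 − 2cos θ₁ − 2cos θ₂). Then the infimum over ω ∈ ℝ of sup_{θ ∈ T^H} |1 − ω·f₀(θ)| equals 7/25, and this infimum is attained at ω = 24/25. -/
open Real

/-- The LFA smoothing factor of the Vanka relaxation with parameter ω. -/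
noncomputable def smoothingFactor (ω : ℝ) : ℝ :=
  sSup ((fun θ => |1 - ω * f0 θ|) '' TH)

lemma poly_bounds {x y : ℝ} (hx1 : -1 ≤ x) (hx2 : x ≤ 1) (hy1 : -1 ≤ y) (hy2 : y ≤ 0) :
    9 ≤ (7 + 2*(x+y) + x*y) * (2 - x - y) ∧ (7 + 2*(x+y) + x*y) * (2 - x - y) ≤ 16 := by
  constructor
  · nlinarith [mul_nonneg (sub_nonneg.2 hx2) (neg_nonneg.2 hy2), sq_nonneg (x+y), sq_nonneg (x-y), mul_nonneg (by linarith : (0:ℝ) ≤ x+1) (by linarith : (0:ℝ) ≤ y+1), mul_nonneg (by linarith : (0:ℝ) ≤ 1-x) (by linarith : (0:ℝ) ≤ -y), sq_nonneg ((1-x)*(-y))]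
  · nlinarith [sq_nonneg (x+y+2), mul_nonneg (by linarith : (0:ℝ) ≤ x+1) (by linarith : (0:ℝ) ≤ y+1), mul_nonneg (by linarith : (0:ℝ) ≤ 1-x) (by linarith : (0:ℝ) ≤ -y), sq_nonneg (x-y), sq_nonneg (x+1), sq_nonneg (y+1)]

lemma f0_bounds {θ : ℝ × ℝ} (hθ : θ ∈ TH) : 3/4 ≤ f0 θ ∧ f0 θ ≤ 4/3 := by
  obtain ⟨⟨h1, h2⟩, h3⟩ := hθ
  set x := Real.cos θ.1 with hx
  set y := Real.cos θ.2 with hy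
  have hx1 : -1 ≤ x := Real.neg_one_le_cos θ.1
  have hx2 : x ≤ 1 := Real.cos_le_one θ.1
  have hy1 : -1 ≤ y := Real.neg_one_le_cos θ.2
  have hy2 : y ≤ 1 := Real.cos_le_one θ.2
  have hf : f0 θ = (7 + 2*(x+y) + x*y) * (2 - x - y) / 12 := by
    simp only [f0, ← hx, ← hy]; ring
  have hkey : x ≤ 0 ∨ y ≤ 0 := by
    rw [Set.mem_prod] at h3
    push_neg at h3
    rcases Set.mem_Ico.1 h1 with ⟨ha1, ha2⟩
    rcases Set.mem_Ico.1 h2 with ⟨hb1, hb2⟩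
    by_cases hc : θ.1 ∈ Set.Ico (-(π/2)) (π/2)
    · right
      have := h3 hc
      have hge : π/2 ≤ θ.2 := by
        rcases lt_or_ge θ.2 (π/2) with h | h
        · exact absurd (Set.mem_Ico.2 ⟨hb1, h⟩) this
        · exact h
      exact Real.cos_nonpos_of_pi_div_two_le_of_le hge (by linarith)
    · left
      have hge : π/2 ≤ θ.1 := by
        rcases lt_or_ge θ.1 (π/2) with h | h
        · exact absurd (Set.mem_Ico.2 ⟨ha1, h⟩) hc
        · exact h
      exact Real.cos_nonpos_of_pi_div_two_le_of_le hge (by linarith)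
  rcases hkey with hx0 | hy0
  · have h := poly_bounds hy1 hy2 hx1 hx0
    constructor <;> rw [hf] <;> nlinarith [h.1, h.2]
  · have h := poly_bounds hx1 hx2 hy1 hy0
    constructor <;> rw [hf] <;> nlinarith [h.1, h.2]

lemma mem_a : ((π/2 : ℝ), (0:ℝ)) ∈ TH := by
  have hπ := Real.pi_pos
  refine ⟨⟨Set.mem_Ico.2 ⟨by linarith, by linarith⟩, Set.mem_Ico.2 ⟨by linarith, by linarith⟩⟩, ?_⟩
  intro h
  exact absurd (Set.mem_Ico.1 h.1).2 (by simp)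

lemma mem_b : ((π : ℝ), (π:ℝ)) ∈ TH := by
  have hπ := Real.pi_pos
  refine ⟨⟨Set.mem_Ico.2 ⟨by linarith, by linarith⟩, Set.mem_Ico.2 ⟨by linarith, by linarith⟩⟩, ?_⟩
  intro h
  exact absurd (Set.mem_Ico.1 h.1).2 (by simp; linarith)

lemma f0_a : f0 ((π/2 : ℝ), (0:ℝ)) = 3/4 := by
  simp [f0, Real.cos_pi_div_two, Real.cos_zero]; norm_num

lemma f0_b : f0 ((π : ℝ), (π:ℝ)) = 4/3 := by
  simp [f0, Real.cos_pi]; norm_num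

lemma bdd (ω : ℝ) : BddAbove ((fun θ => |1 - ω * f0 θ|) '' TH) := by
  refine ⟨1 + |ω| * (4/3), ?_⟩
  rintro v ⟨θ, hθ, rfl⟩
  obtain ⟨h1, h2⟩ := f0_bounds hθ
  have : |1 - ω * f0 θ| ≤ |1| + |ω * f0 θ| := abs_sub _ _
  have h3 : |ω * f0 θ| = |ω| * |f0 θ| := abs_mul _ _
  have h4 : |f0 θ| ≤ 4/3 := abs_le.2 ⟨by linarith, h2⟩
  have h5 : |ω| * |f0 θ| ≤ |ω| * (4/3) := by
    exact mul_le_mul_of_nonneg_left h4 (abs_nonneg ω)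
  simp at this
  linarith

lemma sf_eq : smoothingFactor (24/25) = 7/25 := by
  unfold smoothingFactor
  apply le_antisymm
  · apply csSup_le
    · exact ⟨_, Set.mem_image_of_mem _ mem_b⟩
    · rintro v ⟨θ, hθ, rfl⟩
      obtain ⟨h1, h2⟩ := f0_bounds hθ
      rw [abs_le]; constructor <;> simp <;> linarith
  · have := le_csSup (bdd (24/25)) (Set.mem_image_of_mem _ mem_b)
    simpa [f0_b, abs_le] using (by
      calc (7:ℝ)/25 = |1 - (24/25) * f0 ((π : ℝ), (π:ℝ))| := by rw [f0_b]; rw [abs_of_nonpos] <;> norm_num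
      _ ≤ _ := le_csSup (bdd (24/25)) (Set.mem_image_of_mem _ mem_b))

lemma sf_lower (ω : ℝ) : 7/25 ≤ smoothingFactor ω := by
  unfold smoothingFactor
  have ha : |1 - ω * f0 ((π/2 : ℝ), (0:ℝ))| ≤ sSup ((fun θ => |1 - ω * f0 θ|) '' TH) :=
    le_csSup (bdd ω) (Set.mem_image_of_mem _ mem_a)
  have hb : |1 - ω * f0 ((π : ℝ), (π:ℝ))| ≤ sSup ((fun θ => |1 - ω * f0 θ|) '' TH) :=
    le_csSup (bdd ω) (Set.mem_image_of_mem _ mem_b)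
  rw [f0_a] at ha
  rw [f0_b] at hb
  have h1 : 1 - ω * (3/4) ≤ |1 - ω * (3/4)| := le_abs_self _
  have h2 : -(1 - ω * (4/3)) ≤ |1 - ω * (4/3)| := neg_le_abs _
  linarith

theorem stmt_8 :
    sInf (Set.range smoothingFactor) = 7/25 ∧ smoothingFactor (24/25) = 7/25 := by
  refine ⟨le_antisymm ?_ ?_, sf_eq⟩
  · have : smoothingFactor (24/25) ∈ Set.range smoothingFactor := ⟨_, rfl⟩
    have hb : BddBelow (Set.range smoothingFactor) := ⟨7/25, by rintro v ⟨ω, rfl⟩; exact sf_lower ω⟩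
    calc sInf (Set.range smoothingFactor) ≤ smoothingFactor (24/25) := csInf_le hb this
    _ = 7/25 := sf_eq
  · exact le_csInf ⟨_, ⟨0, rfl⟩⟩ (by rintro v ⟨ω, rfl⟩; exact sf_lower ω)
end
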